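/- Let k ≥ 2 and let D be a binary de Bruijn sequence of order k, of length n = 2^k + k − 1. Let F be a finite family of square regions of B_D (each region given by its top-left position and a side length, lying inside the n×n grid) whose union covers all n² positions, and such that every region in F of side s ≥ 2 has another occurrence, i.e., there is an equal s×s submatrix of B_D whose top-left position differs from that of the region. Then |F| ≥ n²/(k−1)². -/

import Mathlib

/-!
Statement 10: Let `k ≥ 2` and let `D` be a binary de Bruijn sequence of order `k`,
of length `n = 2^k + k − 1` (every binary string of length `k` occurs exactly once
in `D`).  Let `F` be a finite family of square regions of `B_D` (each given by the
0-based top-left position `q.1 = (r, c)` and side `q.2 = s ≥ 1`, lying inside the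
`n × n` grid) whose union covers all `n²` positions, and such that every region of
side `s ≥ 2` has another occurrence in `B_D` (an equal `s × s` submatrix with a
different top-left position).  Then `|F| ≥ n²/(k−1)²`.
-/

theorem statement10 (k : ℕ) (hk : 2 ≤ k) (n : ℕ) (hn : n = 2 ^ k + k - 1)
    (D : ℕ → Bool)
    (hD : ∀ w : ℕ → Bool, ∃! i, i + k ≤ n ∧ ∀ t, t < k → D (i + t) = w t)
    (F : Finset ((ℕ × ℕ) × ℕ))
    (hin : ∀ q ∈ F, 1 ≤ q.2 ∧ q.1.1 + q.2 ≤ n ∧ q.1.2 + q.2 ≤ n)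
    (hcov : ∀ i j, i < n → j < n → ∃ q ∈ F,
      q.1.1 ≤ i ∧ i < q.1.1 + q.2 ∧ q.1.2 ≤ j ∧ j < q.1.2 + q.2)
    (hsrc : ∀ q ∈ F, 2 ≤ q.2 → ∃ r' c', (r', c') ≠ q.1 ∧
      r' + q.2 ≤ n ∧ c' + q.2 ≤ n ∧
      ∀ a b, a < q.2 → b < q.2 →
        ((D (r' + a), D (c' + b)) : Bool × Bool) = (D (q.1.1 + a), D (q.1.2 + b))) :
    ((n ^ 2 : ℕ) : ℚ) / (((k - 1) ^ 2 : ℕ) : ℚ) ≤ (F.card : ℚ) := by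
  have hside : ∀ q ∈ F, q.2 ≤ k - 1 := by
    intro q hq
    by_contra h
    have hks : k ≤ q.2 := by omega
    obtain ⟨h1, h2, h3⟩ := hin q hq
    obtain ⟨r', c', hne, hr', hc', heq⟩ := hsrc q hq (le_trans hk hks)
    -- rows
    obtain ⟨i, _, hiu⟩ := hD (fun t => D (q.1.1 + t))
    have e1 : q.1.1 = i := hiu q.1.1 ⟨by omega, fun t ht => rfl⟩
    have e2 : r' = i := hiu r' ⟨by omega, fun t ht =>
      congrArg Prod.fst (heq t 0 (by omega) (by omega))⟩
    obtain ⟨j, _, hju⟩ := hD (fun t => D (q.1.2 + t))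
    have f1 : q.1.2 = j := hju q.1.2 ⟨by omega, fun t ht => rfl⟩
    have f2 : c' = j := hju c' ⟨by omega, fun t ht =>
      congrArg Prod.snd (heq 0 t (by omega) (by omega))⟩
    exact hne (by rw [e2, f2, e1.symm, f1.symm])
  have hcount : n ^ 2 ≤ F.card * (k - 1) ^ 2 := by
    have hsub : (Finset.range n ×ˢ Finset.range n) ⊆
        F.biUnion (fun q => Finset.Ico q.1.1 (q.1.1 + q.2) ×ˢ Finset.Ico q.1.2 (q.1.2 + q.2)) := by
      intro p hp
      simp only [Finset.mem_product, Finset.mem_range] at hp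
      obtain ⟨q, hq, hcd⟩ := hcov p.1 p.2 hp.1 hp.2
      simp only [Finset.mem_biUnion, Finset.mem_product, Finset.mem_Ico]
      exact ⟨q, hq, ⟨hcd.1, hcd.2.1⟩, hcd.2.2.1, hcd.2.2.2⟩
    calc n ^ 2 = (Finset.range n ×ˢ Finset.range n).card := by
          simp [Finset.card_product, sq]
      _ ≤ _ := Finset.card_le_card hsub
      _ ≤ ∑ q ∈ F, (Finset.Ico q.1.1 (q.1.1 + q.2) ×ˢ Finset.Ico q.1.2 (q.1.2 + q.2)).card :=
          Finset.card_biUnion_le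
      _ ≤ ∑ _q ∈ F, (k - 1) ^ 2 := Finset.sum_le_sum (fun q hq => by
          have hs := hside q hq
          simp only [Finset.card_product, Nat.card_Ico, Nat.add_sub_cancel_left, sq]
          exact Nat.mul_le_mul hs hs)
      _ = F.card * (k - 1) ^ 2 := by rw [Finset.sum_const, smul_eq_mul]
  have hpos : (0 : ℚ) < (((k - 1) ^ 2 : ℕ) : ℚ) := by
    have : 0 < (k - 1) ^ 2 := by
      have : 1 ≤ k - 1 := by omega
      exact Nat.pow_pos this
    exact_mod_cast this
  rw [div_le_iff₀ hpos]
  exact_mod_cast hcount
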